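/- Let H be a parity check matrix of the q-ary Hamming code of length n = (q^m−1)/(q−1) (so the columns of H are representatives of all 1-dimensional subspaces of F_q^m). Then the lifted code C_r = {v ∈ (F_{q^r})^n : H v^T = 0} over F_{q^r} has covering radius min{m, r}. -/

import Mathlib

open Matrix

/-- H is a parity check matrix of a Hamming code: its columns are nonzero, pairwise
non-proportional, and represent all 1-dimensional subspaces of F^m. -/
def IsHammingPCM {F : Type*} [Field F] {m n : ℕ} (H : Matrix (Fin m) (Fin n) F) : Prop :=
  (∀ j, (fun i => H i j) ≠ (0 : Fin m → F)) ∧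
  (∀ j j' : Fin n, j ≠ j' → ∀ c : F, (fun i => H i j) ≠ c • (fun i => H i j')) ∧
  (∀ x : Fin m → F, x ≠ 0 → ∃ (j : Fin n) (c : F), x = c • (fun i => H i j))

lemma aux_exists_preimage {m n : ℕ} {L : Type} [Field L] [DecidableEq L]
    (M : Matrix (Fin m) (Fin n) L) {ι : Type} [DecidableEq ι]
    (T : Finset ι) (lam : ι → L) (jm : ι → Fin n) (s : Fin m → L)
    (hs : s = ∑ t ∈ T, lam t • fun i => M i (jm t)) :
    ∃ e : Fin n → L, M.mulVec e = s ∧ hammingNorm e ≤ T.card := by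
  classical
  refine ⟨∑ t ∈ T, lam t • (Pi.single (jm t) 1 : Fin n → L), ?_, ?_⟩
  · have : M.mulVec (∑ t ∈ T, lam t • (Pi.single (jm t) 1 : Fin n → L))
        = ∑ t ∈ T, lam t • M.mulVec (Pi.single (jm t) 1 : Fin n → L) := by
      rw [show M.mulVec = M.mulVecLin from rfl, map_sum]
      simp only [_root_.map_smul]
    rw [this, hs]
    refine Finset.sum_congr rfl fun t _ => ?_
    rw [Matrix.mulVec_single]
    ext i
    simp [mul_one]
  · have hsub : ({j | (∑ t ∈ T, lam t • (Pi.single (jm t) 1 : Fin n → L)) j ≠ 0} : Finset (Fin n))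
        ⊆ T.image jm := by
      intro j hj
      simp only [Finset.mem_filter, Finset.mem_univ, true_and] at hj
      by_contra hc
      apply hj
      rw [Finset.sum_apply]
      refine Finset.sum_eq_zero fun t ht => ?_
      have : jm t ≠ j := fun h => hc (h ▸ Finset.mem_image_of_mem jm ht)
      simp [Pi.single_eq_of_ne (Ne.symm this)]
    calc hammingNorm (∑ t ∈ T, lam t • (Pi.single (jm t) 1 : Fin n → L))
        ≤ (T.image jm).card := Finset.card_le_card hsub
      _ ≤ T.card := Finset.card_image_le

lemma aux_le_m {m n : ℕ} {K L : Type} [Field K] [Field L] [DecidableEq L] [Algebra K L]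
    (hm : 0 < m)
    (H : Matrix (Fin m) (Fin n) K) (hH : IsHammingPCM H) (s : Fin m → L) :
    ∃ e : Fin n → L, (H.map (algebraMap K L)).mulVec e = s ∧ hammingNorm e ≤ m := by
  classical
  set f := algebraMap K L with hf
  have hchoice : ∀ i : Fin m, ∃ (j : Fin n) (c : K),
      (Pi.single i 1 : Fin m → K) = c • fun i' => H i' j := by
    intro i
    refine hH.2.2 _ fun h => one_ne_zero (α := K) ?_
    simpa using congrFun h i
  choose jm cm hjc using hchoice
  have hrep : s = ∑ i : Fin m, (s i * f (cm i)) • fun i' => (H.map f) i' (jm i) := by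
    funext i'
    rw [Finset.sum_apply]
    have key : ∀ i : Fin m,
        (((s i * f (cm i)) • fun i'' => (H.map f) i'' (jm i)) : Fin m → L) i'
          = s i * f ((Pi.single i 1 : Fin m → K) i') := by
      intro i
      have h2 := congrFun (hjc i) i'
      simp only [Pi.smul_apply, smul_eq_mul] at h2
      simp only [Pi.smul_apply, smul_eq_mul, Matrix.map_apply, h2, _root_.map_mul]
      ring
    rw [Finset.sum_congr rfl fun i _ => key i, Finset.sum_eq_single i']
    · simp
    · intro i _ hne
      rw [Pi.single_eq_of_ne (Ne.symm hne)]
      simp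
    · simp
  obtain ⟨e, he1, he2⟩ := aux_exists_preimage (H.map f) Finset.univ
    (fun i => s i * f (cm i)) jm s hrep
  exact ⟨e, he1, by simpa using he2⟩

lemma aux_le_r {m n r : ℕ} {K L : Type} [Field K] [Field L] [DecidableEq L] [Algebra K L]
    (hm : 0 < m) (b : Module.Basis (Fin r) K L)
    (H : Matrix (Fin m) (Fin n) K) (hH : IsHammingPCM H) (s : Fin m → L) :
    ∃ e : Fin n → L, (H.map (algebraMap K L)).mulVec e = s ∧ hammingNorm e ≤ r := by
  classical
  set f := algebraMap K L with hf
  obtain ⟨j0, c0, -⟩ := hH.2.2 (Pi.single ⟨0, hm⟩ 1)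
    (fun h => one_ne_zero (α := K) (by simpa using congrFun h ⟨0, hm⟩))
  set v : Fin r → Fin m → K := fun t i => b.repr (s i) t with hv
  have hchoice : ∀ t : Fin r, ∃ (j : Fin n) (c : K), v t = c • fun i => H i j := by
    intro t
    by_cases h : v t = 0
    · exact ⟨j0, 0, by simp [h]⟩
    · exact hH.2.2 _ h
  choose jm cm hjc using hchoice
  have hrep : s = ∑ t : Fin r, (b t * f (cm t)) • fun i => (H.map f) i (jm t) := by
    funext i
    rw [Finset.sum_apply]
    have key : ∀ t : Fin r,
        (((b t * f (cm t)) • fun i'' => (H.map f) i'' (jm t)) : Fin m → L) i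
          = b.repr (s i) t • b t := by
      intro t
      have h2 := congrFun (hjc t) i
      simp only [Pi.smul_apply, smul_eq_mul] at h2
      have h3 : b.repr (s i) t = cm t * H i (jm t) := h2
      simp only [Pi.smul_apply, smul_eq_mul, Matrix.map_apply, Algebra.smul_def, h3, _root_.map_mul]
      ring
    rw [Finset.sum_congr rfl fun t _ => key t, Module.Basis.sum_repr]
  obtain ⟨e, he1, he2⟩ := aux_exists_preimage (H.map f) Finset.univ
    (fun t => b t * f (cm t)) jm s hrep
  exact ⟨e, he1, by simpa using he2⟩


/-- The code obtained by lifting the q-ary Hamming code of length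
(q^m−1)/(q−1) to F_{q^r} has covering radius min{m, r}. -/
theorem lifted_hamming_covering_radius
    {q m r n : ℕ} (K L : Type) [Field K] [Fintype K] [DecidableEq K]
    [Field L] [Fintype L] [DecidableEq L] [Algebra K L]
    (hq : Fintype.card K = q) (hL : Fintype.card L = q ^ r)
    (hm : 2 ≤ m) (hr : 1 ≤ r) (hn : n * (q - 1) = q ^ m - 1)
    (H : Matrix (Fin m) (Fin n) K) (hH : IsHammingPCM H) :
    (∀ x : Fin n → L, ∃ c : Fin n → L,
        (H.map (algebraMap K L)).mulVec c = 0 ∧ hammingDist x c ≤ min m r) ∧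
      (∃ x : Fin n → L, ∀ c : Fin n → L,
        (H.map (algebraMap K L)).mulVec c = 0 → min m r ≤ hammingDist x c) := by
  classical
  set f := algebraMap K L with hf
  set M := H.map f with hM
  have hq2 : 2 ≤ q := hq ▸ Fintype.one_lt_card
  have hfin : Module.finrank K L = r := by
    have h := Module.card_eq_pow_finrank (K := K) (V := L)
    rw [hq, hL] at h
    exact Nat.pow_right_injective hq2 h.symm
  let b : Module.Basis (Fin r) K L := (Module.finBasis K L).reindex (finCongr hfin)
  have hm1 : 0 < m := by omega
  have upper : ∀ s : Fin m → L, ∃ e : Fin n → L, M.mulVec e = s ∧ hammingNorm e ≤ min m r := by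
    intro s
    rcases le_total m r with h | h
    · obtain ⟨e, h1, h2⟩ := aux_le_m hm1 H hH s
      exact ⟨e, h1, by omega⟩
    · obtain ⟨e, h1, h2⟩ := aux_le_r hm1 b H hH s
      exact ⟨e, h1, by omega⟩
  constructor
  · intro x
    obtain ⟨e, h1, h2⟩ := upper (M.mulVec x)
    refine ⟨x - e, ?_, ?_⟩
    · rw [Matrix.mulVec_sub, h1, sub_self]
    · rw [hammingDist_comm, hammingDist_eq_hammingNorm, neg_sub, sub_add_cancel]
      exact h2
  · set s : Fin m → L := fun i => if h : (i : ℕ) < r then b ⟨i, h⟩ else 0 with hsdef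
    obtain ⟨x, hx, -⟩ := upper s
    refine ⟨x, fun c hc => ?_⟩
    set d : Fin n → L := x - c with hd
    have hds : M.mulVec d = s := by rw [hd, Matrix.mulVec_sub, hx, hc, sub_zero]
    rw [hammingDist_comm, hammingDist_eq_hammingNorm, neg_add_eq_sub]
    set S : Finset (Fin n) := {j | d j ≠ 0} with hS
    have hnorm : hammingNorm (x - c) = S.card := rfl
    rw [hnorm]
    set cols : Fin n → Fin m → K := fun j i => H i j with hcols
    set V : Submodule K (Fin m → K) :=
      Submodule.span K ((S.image cols : Finset (Fin m → K)) : Set (Fin m → K)) with hV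
    -- s i restricted to the support
    have hsum : ∀ i : Fin m, s i = ∑ j ∈ S, H i j • d j := by
      intro i
      have h1 : s i = ∑ j : Fin n, f (H i j) * d j := by
        rw [← hds]; rfl
      rw [h1]
      rw [← Finset.sum_subset (Finset.subset_univ S)]
      · exact Finset.sum_congr rfl fun j _ => (Algebra.smul_def _ _).symm
      · intro j _ hj
        have : d j = 0 := by
          by_contra h
          exact hj (by simp [hS, h])
        simp [this]
    -- the key vectors lie in V
    have hw : ∀ (p : Fin r) (hp : (p : ℕ) < m),
        (Pi.single (⟨(p : ℕ), hp⟩ : Fin m) 1 : Fin m → K) ∈ V := by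
      intro p hp
      have hweq : (Pi.single (⟨(p : ℕ), hp⟩ : Fin m) 1 : Fin m → K)
          = ∑ j ∈ S, (b.repr (d j) p) • cols j := by
        funext i
        rw [Finset.sum_apply]
        have hrepr : b.repr (s i) p = ∑ j ∈ S, H i j * b.repr (d j) p := by
          rw [hsum i, map_sum, Finset.sum_apply']
          refine Finset.sum_congr rfl fun j _ => ?_
          rw [_root_.map_smul]
          rfl
        have hval : ∑ j ∈ S, ((b.repr (d j) p • cols j) : Fin m → K) i
            = b.repr (s i) p := by
          rw [hrepr]
          refine Finset.sum_congr rfl fun j _ => ?_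
          simp [hcols, mul_comm]
        rw [hval]
        -- now compute b.repr (s i) p
        by_cases h : (i : ℕ) < r
        · have : s i = b ⟨(i : ℕ), h⟩ := by simp [hsdef, h]
          rw [this, Module.Basis.repr_self_apply]
          by_cases h2 : (i : ℕ) = (p : ℕ)
          · have e1 : (⟨(i : ℕ), h⟩ : Fin r) = p := Fin.ext h2
            have e2 : i = (⟨(p : ℕ), hp⟩ : Fin m) := Fin.ext h2
            rw [if_pos e1, e2, Pi.single_eq_same]
          · have e1 : (⟨(i : ℕ), h⟩ : Fin r) ≠ p := fun hh => h2 (by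
              simpa using congrArg Fin.val hh)
            have e2 : i ≠ (⟨(p : ℕ), hp⟩ : Fin m) := fun hh => h2 (by
              simpa using congrArg Fin.val hh)
            rw [if_neg e1, Pi.single_eq_of_ne e2]
        · have : s i = 0 := by simp [hsdef, h]
          rw [this, map_zero, Finsupp.coe_zero, Pi.zero_apply]
          have e2 : i ≠ (⟨(p : ℕ), hp⟩ : Fin m) := by
            intro hh
            apply h
            rw [hh]
            exact p.2
          rw [Pi.single_eq_of_ne e2]
      rw [hweq]
      refine Submodule.sum_mem _ fun j hj => Submodule.smul_mem _ _ ?_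
      exact Submodule.subset_span (by
        simp only [Finset.coe_image, Set.mem_image, Finset.mem_coe]
        exact ⟨j, hj, rfl⟩)
    -- linear independence of the singles
    set t := min m r with ht
    set g : Fin t → Fin m := fun p => ⟨(p : ℕ), lt_of_lt_of_le p.2 (min_le_left m r)⟩ with hg
    set u : Fin t → (Fin m → K) := fun p => Pi.single (g p) 1 with hu
    have hginj : Function.Injective g := by
      intro a b hab
      exact Fin.ext (by simpa [hg] using congrArg Fin.val hab)
    have hli : LinearIndependent K u := by
      have : u = (Pi.basisFun K (Fin m)) ∘ g := by
        funext p
        simp [hu, Pi.basisFun_apply]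
      rw [this]
      exact (Pi.basisFun K (Fin m)).linearIndependent.comp g hginj
    have hspan : Submodule.span K (Set.range u) ≤ V := by
      rw [Submodule.span_le]
      rintro _ ⟨p, rfl⟩
      exact hw ⟨(p : ℕ), lt_of_lt_of_le p.2 (min_le_right m r)⟩
        (lt_of_lt_of_le p.2 (min_le_left m r))
    have h2 : Module.finrank K (Submodule.span K (Set.range u)) = t := by
      rw [finrank_span_eq_card hli, Fintype.card_fin]
    have h3 : Module.finrank K (Submodule.span K (Set.range u)) ≤ Module.finrank K V :=
      Submodule.finrank_mono hspan
    have h4 : Module.finrank K V ≤ (S.image cols).card :=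
      finrank_span_finset_le_card (S.image cols)
    calc min m r = t := rfl
      _ ≤ Module.finrank K V := h2 ▸ h3
      _ ≤ (S.image cols).card := h4
      _ ≤ S.card := Finset.card_image_le
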